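/- Let p be a prime and t a real number with |t| < p. Define S(t) = ∑_{n odd, n≥1} ζ(n+1) t^{n+1}/p^n, A₁(t) = ∑_{n≥1} 1/(n(1 − t/p + n)) and B₁(t) = ∑_{n≥1} 1/(n(1 + t/p + n)). Then 2S(t) = t ( 2pt/(p² − t²) − (1 − t/p) A₁(t) + (1 + t/p) B₁(t) ). -/

import Mathlib

/-- `S(t) = ∑_{n odd, n ≥ 1} ζ(n+1) t^(n+1) / p^n` (sum over odd `n = 2k+1`). -/
noncomputable def S (p : ℕ) (t : ℝ) : ℝ :=
  ∑' k : ℕ, (riemannZeta (2 * k + 2)).re * t ^ (2 * k + 2) / (p : ℝ) ^ (2 * k + 1)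

/-- `A₁(t) = ∑_{n ≥ 1} 1 / (n (1 - t/p + n))`. -/
noncomputable def A₁ (p : ℕ) (t : ℝ) : ℝ :=
  ∑' n : ℕ, 1 / (((n : ℝ) + 1) * (1 - t / p + ((n : ℝ) + 1)))

/-- `B₁(t) = ∑_{n ≥ 1} 1 / (n (1 + t/p + n))`. -/
noncomputable def B₁ (p : ℕ) (t : ℝ) : ℝ :=
  ∑' n : ℕ, 1 / (((n : ℝ) + 1) * (1 + t / p + ((n : ℝ) + 1)))

lemma zeta_re_eq (k : ℕ) :
    (riemannZeta (2 * (k : ℂ) + 2)).re = ∑' m : ℕ, 1 / ((m : ℝ) + 1) ^ (2 * k + 2) := by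
  have h1 : (2 * (k : ℂ) + 2) = ((2 * k + 2 : ℕ) : ℂ) := by push_cast; ring
  rw [h1, zeta_nat_eq_tsum_of_gt_one (by omega)]
  have h2 : ∀ n : ℕ, (1 / (n : ℂ) ^ (2 * k + 2)) = ((1 / (n : ℝ) ^ (2 * k + 2) : ℝ) : ℂ) := by
    intro n; push_cast; ring
  rw [tsum_congr h2, ← Complex.ofReal_tsum, Complex.ofReal_re]
  have hs : Summable (fun n : ℕ => 1 / (n : ℝ) ^ (2 * k + 2)) :=
    Real.summable_one_div_nat_pow.mpr (by omega)
  rw [Summable.tsum_eq_zero_add hs]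
  simp only [Nat.cast_zero, Nat.cast_add, Nat.cast_one]
  rw [zero_pow (by omega), div_zero, zero_add]

lemma summable_one_div_nat_add_one_sq : Summable (fun m : ℕ => 1 / ((m : ℝ) + 1) ^ 2) := by
  have := (summable_nat_add_iff (f := fun n : ℕ => 1 / (n : ℝ) ^ 2) 1).mpr
    (Real.summable_one_div_nat_pow.mpr one_lt_two)
  simpa using this

/-- geometric inner sum -/
lemma inner_geom (x : ℝ) (hx : |x| < 1) (m : ℕ) :
    ∑' k : ℕ, (x ^ 2 / ((m : ℝ) + 1) ^ 2) ^ (k + 1) = x ^ 2 / (((m : ℝ) + 1) ^ 2 - x ^ 2) := by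
  have hm1 : (1 : ℝ) ≤ ((m : ℝ) + 1) ^ 2 := by
    nlinarith [Nat.cast_nonneg (α := ℝ) m]
  have hx2 : x ^ 2 < 1 := by nlinarith [sq_abs x, abs_nonneg x]
  set r := x ^ 2 / ((m : ℝ) + 1) ^ 2 with hr
  have hm0 : (0 : ℝ) < ((m : ℝ) + 1) ^ 2 := by positivity
  have hr0 : 0 ≤ r := by positivity
  have hr1 : r < 1 := by
    rw [hr, div_lt_one hm0]; nlinarith
  have hd : (0 : ℝ) < ((m : ℝ) + 1) ^ 2 - x ^ 2 := by nlinarith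
  calc ∑' k : ℕ, r ^ (k + 1) = ∑' k : ℕ, r * r ^ k := by
        refine tsum_congr fun k => ?_; ring
    _ = r * (1 - r)⁻¹ := by rw [tsum_mul_left, tsum_geometric_of_lt_one hr0 hr1]
    _ = x ^ 2 / (((m : ℝ) + 1) ^ 2 - x ^ 2) := by
        rw [hr]
        have hmne : ((m:ℝ)+1)^2 ≠ 0 := ne_of_gt hm0
        have h2 : (1:ℝ) - x^2/((m:ℝ)+1)^2 = (((m:ℝ)+1)^2 - x^2)/((m:ℝ)+1)^2 := by
          field_simp
        rw [h2, inv_div, div_mul_div_comm, mul_comm (x^2) (((m:ℝ)+1)^2),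
          mul_div_mul_left _ _ hmne]

lemma summable_F (x : ℝ) (hx : |x| < 1) :
    Summable (fun q : ℕ × ℕ => (x ^ 2 / ((q.2 : ℝ) + 1) ^ 2) ^ (q.1 + 1)) := by
  have hx2 : x ^ 2 < 1 := by nlinarith [sq_abs x, abs_nonneg x]
  have hg : Summable (fun k : ℕ => (x ^ 2) ^ (k + 1)) := by
    have := (summable_geometric_of_lt_one (sq_nonneg x) hx2).mul_left (x ^ 2)
    refine this.congr fun k => ?_; ring
  have hprod := hg.mul_of_nonneg summable_one_div_nat_add_one_sq
    (fun k => by positivity) (fun m => by positivity)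
  refine hprod.of_nonneg_of_le (fun q => by positivity) fun q => ?_
  obtain ⟨k, m⟩ := q
  have hm0 : (0 : ℝ) < ((m : ℝ) + 1) ^ 2 := by positivity
  have h1 : (0 : ℝ) ≤ 1 / ((m : ℝ) + 1) ^ 2 := by positivity
  have h2 : 1 / ((m : ℝ) + 1) ^ 2 ≤ 1 := by
    rw [div_le_one hm0]; nlinarith [Nat.cast_nonneg (α := ℝ) m]
  have h3 : (0:ℝ) ≤ (x ^ 2) ^ (k + 1) := by positivity
  calc (x ^ 2 / ((m : ℝ) + 1) ^ 2) ^ (k + 1)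
      = (x ^ 2) ^ (k + 1) * (1 / ((m : ℝ) + 1) ^ 2) ^ (k + 1) := by
        rw [← mul_pow]; ring_nf
    _ ≤ (x ^ 2) ^ (k + 1) * (1 / ((m : ℝ) + 1) ^ 2) ^ 1 :=
        mul_le_mul_of_nonneg_left
          (pow_le_pow_of_le_one h1 h2 (le_add_self : 1 ≤ k + 1)) h3
    _ = (x ^ 2) ^ (k + 1) * (1 / ((m : ℝ) + 1) ^ 2) := by rw [pow_one]

theorem stmt4 (p : ℕ) (hp : p.Prime) (t : ℝ) (ht : |t| < (p : ℝ)) :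
    2 * S p t =
      t * (2 * p * t / ((p : ℝ) ^ 2 - t ^ 2) - (1 - t / p) * A₁ p t + (1 + t / p) * B₁ p t) := by
  have hp0 : (0 : ℝ) < p := by exact_mod_cast hp.pos
  have hp0' : (p : ℝ) ≠ 0 := ne_of_gt hp0
  set x : ℝ := t / p with hxdef
  have htx : t = p * x := by rw [hxdef]; field_simp
  have hx : |x| < 1 := by
    rw [hxdef, abs_div, abs_of_pos hp0, div_lt_one hp0]; exact ht
  have hx2 : x ^ 2 < 1 := by nlinarith [sq_abs x, abs_nonneg x]
  have h1x : (0:ℝ) < 1 - x ^ 2 := by linarith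
  have hxl : -1 < x := (abs_lt.mp hx).1
  have hxr : x < 1 := (abs_lt.mp hx).2
  -- denominators positive
  have hd : ∀ m : ℕ, (0:ℝ) < ((m : ℝ) + 1) ^ 2 - x ^ 2 := by
    intro m
    have : (1:ℝ) ≤ ((m:ℝ)+1)^2 := by nlinarith [Nat.cast_nonneg (α := ℝ) m]
    nlinarith
  -- summability of the master series
  have hsg : Summable (fun m : ℕ => 1 / (((m : ℝ) + 1) ^ 2 - x ^ 2)) := by
    refine (summable_one_div_nat_add_one_sq.mul_left (1 - x^2)⁻¹).of_nonneg_of_le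
      (fun m => le_of_lt (one_div_pos.mpr (hd m))) (fun m => ?_)
    have hm0 : (0:ℝ) < ((m:ℝ)+1)^2 := by positivity
    have key : ((m:ℝ)+1)^2 * (1 - x^2) ≤ ((m:ℝ)+1)^2 - x^2 := by
      nlinarith [Nat.cast_nonneg (α := ℝ) m, sq_nonneg x,
        mul_nonneg (sq_nonneg x) (Nat.cast_nonneg (α := ℝ) m),
        mul_nonneg (mul_nonneg (sq_nonneg x) (Nat.cast_nonneg (α := ℝ) m)) (Nat.cast_nonneg (α := ℝ) m)]
    calc 1 / (((m:ℝ)+1)^2 - x^2) ≤ 1 / (((m:ℝ)+1)^2 * (1 - x^2)) :=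
          one_div_le_one_div_of_le (by positivity) key
      _ = (1 - x^2)⁻¹ * (1 / ((m:ℝ)+1)^2) := by
          rw [one_div, mul_inv]; ring
  -- Step A : S p t = p * ∑' m, x^2 / ((m+1)^2 - x^2)
  have hS : S p t = p * ∑' m : ℕ, x ^ 2 / (((m : ℝ) + 1) ^ 2 - x ^ 2) := by
    have hterm : ∀ k : ℕ,
        (riemannZeta (2 * k + 2)).re * t ^ (2 * k + 2) / (p : ℝ) ^ (2 * k + 1)
          = ∑' m : ℕ, (p : ℝ) * (x ^ 2 / ((m : ℝ) + 1) ^ 2) ^ (k + 1) := by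
      intro k
      rw [zeta_re_eq k, ← tsum_mul_right, ← tsum_div_const]
      refine tsum_congr fun m => ?_
      have hm0 : ((m:ℝ)+1) ≠ 0 := by positivity
      have e1 : 2*(k+1) = 2*k+2 := by ring
      have hE : ((t/(p:ℝ))^2/((m:ℝ)+1)^2)^(k+1)
          = t^(2*k+2)/((p:ℝ)^(2*k+2) * ((m:ℝ)+1)^(2*k+2)) := by
        calc ((t/(p:ℝ))^2/((m:ℝ)+1)^2)^(k+1)
            = (t/(p:ℝ))^(2*(k+1)) / ((m:ℝ)+1)^(2*(k+1)) := by
              rw [div_pow, ← pow_mul, ← pow_mul]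
          _ = t^(2*k+2)/((p:ℝ)^(2*k+2) * ((m:ℝ)+1)^(2*k+2)) := by
              rw [e1, div_pow, div_div]
      rw [hxdef, hE]
      rw [show 2*k+2 = (2*k+1)+1 from rfl, pow_succ (p:ℝ) (2*k+1)]
      field_simp
    have hcol : ∀ m : ℕ, Summable (fun k : ℕ => (p:ℝ) * (x ^ 2 / ((m : ℝ) + 1) ^ 2) ^ (k+1)) := by
      intro m
      have hm1 : (1 : ℝ) ≤ ((m : ℝ) + 1) ^ 2 := by
        nlinarith [Nat.cast_nonneg (α := ℝ) m]
      have hm0 : (0 : ℝ) < ((m : ℝ) + 1) ^ 2 := by positivity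
      have hr0 : 0 ≤ x ^ 2 / ((m : ℝ) + 1) ^ 2 := by positivity
      have hr1 : x ^ 2 / ((m : ℝ) + 1) ^ 2 < 1 := by
        rw [div_lt_one hm0]; nlinarith
      have := (summable_geometric_of_lt_one hr0 hr1).mul_left (x ^ 2 / ((m : ℝ) + 1) ^ 2)
      exact (this.congr fun k => by ring).mul_left _
    have hU : Summable (Function.uncurry
        (fun m k : ℕ => (p : ℝ) * (x ^ 2 / ((m : ℝ) + 1) ^ 2) ^ (k + 1))) := by
      exact ((summable_F x hx).prod_symm.mul_left (p:ℝ))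
    have hrow : ∀ k : ℕ, Summable
        (fun m : ℕ => (p : ℝ) * (x ^ 2 / ((m : ℝ) + 1) ^ 2) ^ (k + 1)) := by
      intro k
      exact (hU.prod_symm.prod_factor k)
    have hswap := Summable.tsum_comm'
      (f := fun m k : ℕ => (p : ℝ) * (x ^ 2 / ((m : ℝ) + 1) ^ 2) ^ (k + 1))
      hU hcol hrow
    rw [S, tsum_congr hterm, hswap]
    rw [← tsum_mul_left]
    refine tsum_congr fun m => ?_
    rw [tsum_mul_left, inner_geom x hx m]
  -- summability of A and B series
  have hApos : ∀ n : ℕ, (0:ℝ) < ((n:ℝ)+1) * (1 - x + ((n:ℝ)+1)) := by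
    intro n
    have : (0:ℝ) ≤ (n:ℝ) := Nat.cast_nonneg n
    have h1 : (0:ℝ) < (n:ℝ)+1 := by linarith
    have h2 : (0:ℝ) < 1 - x + ((n:ℝ)+1) := by linarith
    positivity
  have hBpos : ∀ n : ℕ, (0:ℝ) < ((n:ℝ)+1) * (1 + x + ((n:ℝ)+1)) := by
    intro n
    have : (0:ℝ) ≤ (n:ℝ) := Nat.cast_nonneg n
    have h1 : (0:ℝ) < (n:ℝ)+1 := by linarith
    have h2 : (0:ℝ) < 1 + x + ((n:ℝ)+1) := by linarith
    positivity
  have hsA : Summable (fun n : ℕ => 1 / (((n:ℝ)+1) * (1 - x + ((n:ℝ)+1)))) := by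
    refine summable_one_div_nat_add_one_sq.of_nonneg_of_le
      (fun n => le_of_lt (one_div_pos.mpr (hApos n))) (fun n => ?_)
    have h0 : (0:ℝ) ≤ (n:ℝ) := Nat.cast_nonneg n
    refine one_div_le_one_div_of_le (by positivity) ?_
    nlinarith
  have hsB : Summable (fun n : ℕ => 1 / (((n:ℝ)+1) * (1 + x + ((n:ℝ)+1)))) := by
    refine summable_one_div_nat_add_one_sq.of_nonneg_of_le
      (fun n => le_of_lt (one_div_pos.mpr (hBpos n))) (fun n => ?_)
    have h0 : (0:ℝ) ≤ (n:ℝ) := Nat.cast_nonneg n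
    refine one_div_le_one_div_of_le (by positivity) ?_
    nlinarith
  -- key termwise identity
  have hkey : ∀ n : ℕ,
      (1 + x) * (1 / (((n:ℝ)+1) * (1 + x + ((n:ℝ)+1))))
        - (1 - x) * (1 / (((n:ℝ)+1) * (1 - x + ((n:ℝ)+1))))
      = 2 * x / ((((n:ℝ)+1) + 1) ^ 2 - x ^ 2) := by
    intro n
    have h0 : (0:ℝ) ≤ (n:ℝ) := Nat.cast_nonneg n
    have hN : (0:ℝ) < (n:ℝ)+1 := by linarith
    have hd1 : (0:ℝ) < 1 - x + ((n:ℝ)+1) := by linarith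
    have hd2 : (0:ℝ) < 1 + x + ((n:ℝ)+1) := by linarith
    have hdd : (0:ℝ) < (((n:ℝ)+1)+1)^2 - x^2 := by nlinarith
    field_simp
    ring
  -- combination of A and B
  have hAB : (1 + x) * B₁ p t - (1 - x) * A₁ p t
      = ∑' n : ℕ, 2 * x / ((((n:ℝ)+1) + 1) ^ 2 - x ^ 2) := by
    rw [A₁, B₁, ← hxdef, ← tsum_mul_left, ← tsum_mul_left,
      ← Summable.tsum_sub (hsB.mul_left _) (hsA.mul_left _)]
    exact tsum_congr hkey
  -- shift of the master sum
  have hshift : ∑' m : ℕ, 2 * x / (((m : ℝ) + 1) ^ 2 - x ^ 2)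
      = 2 * x / (1 - x ^ 2) + ∑' n : ℕ, 2 * x / ((((n:ℝ)+1) + 1) ^ 2 - x ^ 2) := by
    have hsum : Summable (fun m : ℕ => 2 * x / (((m : ℝ) + 1) ^ 2 - x ^ 2)) := by
      have := hsg.mul_left (2 * x)
      refine this.congr fun m => ?_; rw [mul_one_div]
    rw [Summable.tsum_eq_zero_add hsum]
    congr 1
    · norm_num
    · refine tsum_congr fun n => ?_
      push_cast
      ring_nf
  -- 2pt/(p^2 - t^2) = 2x/(1-x^2)
  have ht2 : t ^ 2 < (p:ℝ) ^ 2 := by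
    nlinarith [sq_abs t, abs_nonneg t]
  have hpt : (p:ℝ) ^ 2 - t ^ 2 ≠ 0 := by nlinarith
  have hfrac : 2 * (p:ℝ) * t / ((p : ℝ) ^ 2 - t ^ 2) = 2 * x / (1 - x ^ 2) := by
    rw [hxdef]
    rw [div_eq_div_iff hpt (by positivity)]
    field_simp
  -- assemble
  rw [hS, hfrac]
  have : 2*x/(1-x^2) - (1 - x) * A₁ p t + (1 + x) * B₁ p t
      = ∑' m : ℕ, 2 * x / (((m : ℝ) + 1) ^ 2 - x ^ 2) := by
    rw [hshift, ← hAB]; ring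
  rw [← hxdef] at *
  rw [this]
  have hpull : ∑' m : ℕ, 2 * x / (((m : ℝ) + 1) ^ 2 - x ^ 2)
      = (2*x) * ∑' m : ℕ, 1 / (((m : ℝ) + 1) ^ 2 - x ^ 2) := by
    rw [← tsum_mul_left]
    refine tsum_congr fun m => ?_; rw [mul_one_div]
  have hpull2 : ∑' m : ℕ, x ^ 2 / (((m : ℝ) + 1) ^ 2 - x ^ 2)
      = (x^2) * ∑' m : ℕ, 1 / (((m : ℝ) + 1) ^ 2 - x ^ 2) := by
    rw [← tsum_mul_left]
    refine tsum_congr fun m => ?_; rw [mul_one_div]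
  rw [hpull, hpull2, htx]
  ring
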